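/- Fix β > 0 with β ≤ 1/164, a constant A1 > 0, and a function A2 : (0,∞) → (0,∞). Then there exist a constant C > 0 and a threshold z0 such that for all x ≥ z ≥ z0, every nonnegative multiplicative f with f(p^l) ≤ A1^l for all primes p and integers l ≥ 1 and f(n) ≤ A2(ε) n^ε for all n ≥ 1 and all ε > 0, every integer k ≥ 1, and every real r with 1 ≤ r ≤ (log z)/(4 log log z): ∑ f(n)/n, taken over all J-rough integers n with n ≥ z^{1/2}, gcd(n,k) = 1, and largest prime factor p(n) ≤ z^{1/r}, is at most C · exp(−(1/2)(1 − (5/4)β) r log r + ∑_{p ≤ z prime, p ∤ k} f(p)/p), where J = (log log x)^{1−β}. -/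

import Mathlib

open Finset

noncomputable section

/-- A nonnegative multiplicative function: `f ≥ 0`, `f 1 = 1`, and
`f (m n) = f m * f n` whenever `gcd (m, n) = 1`. -/
def MultNonneg (f : ℕ → ℝ) : Prop :=
  (∀ n, 0 ≤ f n) ∧ f 1 = 1 ∧ ∀ m n : ℕ, Nat.Coprime m n → f (m * n) = f m * f n

/-- Shiu's class `M`: `f (p^l) ≤ A1^l` for all primes `p` and `l ≥ 1`, and
`f n ≤ A2 ε * n^ε` for every `ε > 0` and every `n ≥ 1`. -/
def InM (f : ℕ → ℝ) (A1 : ℝ) (A2 : ℝ → ℝ) : Prop :=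
  (∀ p : ℕ, p.Prime → ∀ l : ℕ, 1 ≤ l → f (p ^ l) ≤ A1 ^ l) ∧
  (∀ ε : ℝ, 0 < ε → ∀ n : ℕ, 1 ≤ n → f n ≤ A2 ε * (n : ℝ) ^ ε)


/-- `n` is `J`-smooth: every prime factor of `n` is at most `J`. -/
def JSmooth (J : ℝ) (n : ℕ) : Prop := ∀ p ∈ n.primeFactors, (p : ℝ) ≤ J

/-- `n` is `J`-rough: every prime factor of `n` exceeds `J`. -/
def JRough (J : ℝ) (n : ℕ) : Prop := ∀ p ∈ n.primeFactors, J < (p : ℝ)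

instance (J : ℝ) : DecidablePred (JSmooth J) := fun n =>
  inferInstanceAs (Decidable (∀ p ∈ n.primeFactors, (p : ℝ) ≤ J))

instance (J : ℝ) : DecidablePred (JRough J) := fun n =>
  inferInstanceAs (Decidable (∀ p ∈ n.primeFactors, J < (p : ℝ)))

/-- The roughness/smoothness cutoff `J = (log log x)^(1-β)`. -/
def Jval (x β : ℝ) : ℝ := Real.log (Real.log x) ^ (1 - β)

namespace ShiuAux

lemma harmonic_le : ∀ N : ℕ, ∑ m ∈ Icc 2 N, (1 : ℝ)/m ≤ Real.log N := by
  intro N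
  induction N with
  | zero => simp
  | succ n ih =>
    rcases Nat.lt_or_ge n 1 with h|h
    · interval_cases n
      norm_num
    · rw [Finset.sum_Icc_succ_top (by omega : 2 ≤ n + 1)]
      have hn : (0:ℝ) < n := by exact_mod_cast h
      have hx : (0:ℝ) < (n:ℝ)/(n+1) := by positivity
      have key := Real.log_le_sub_one_of_pos hx
      rw [Real.log_div (by positivity) (by positivity)] at key
      have h1 : (n:ℝ)/(n+1) - 1 = -(1/(n+1)) := by field_simp; ring
      push_cast
      push_cast at ih
      rw [h1] at key
      linarith

lemma theta_le (N : ℕ) :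
    ∑ p ∈ (range (N+1)).filter Nat.Prime, Real.log p ≤ N * Real.log 4 := by
  have h0 : ∀ p ∈ (range (N+1)).filter Nat.Prime, ((p:ℝ)) ≠ 0 := by
    intro p hp
    have := (mem_filter.1 hp).2.pos
    positivity
  have h1 : ∑ p ∈ (range (N+1)).filter Nat.Prime, Real.log p
      = Real.log ((primorial N : ℕ) : ℝ) := by
    rw [primorial, Nat.cast_prod, Real.log_prod h0]
  rw [h1]
  calc Real.log ((primorial N : ℕ) : ℝ) ≤ Real.log ((4:ℝ)^N) := by
        apply Real.log_le_log (by exact_mod_cast primorial_pos N)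
        exact_mod_cast primorial_le_4_pow N
    _ = N * Real.log 4 := by rw [Real.log_pow]

lemma mertens_aux : ∀ N : ℕ, 1 ≤ N →
    ∑ p ∈ (range (N+1)).filter Nat.Prime, Real.log p / p
      ≤ (∑ p ∈ (range (N+1)).filter Nat.Prime, Real.log p) / N
        + Real.log 4 * ∑ m ∈ Icc 2 N, (1:ℝ)/m := by
  intro N
  induction N with
  | zero => omega
  | succ n ih =>
    intro _
    rcases Nat.lt_or_ge n 1 with h|h
    · interval_cases n
      rw [show (range 2).filter Nat.Prime = ∅ by decide]
      norm_num
    · have hih := ih h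
      have hθ := theta_le n
      have hn : (0:ℝ) < n := by exact_mod_cast h
      have hn1 : (0:ℝ) < (n:ℝ)+1 := by positivity
      have hstep : (range (n+1+1)).filter Nat.Prime
          = if (n+1).Prime then insert (n+1) ((range (n+1)).filter Nat.Prime)
            else (range (n+1)).filter Nat.Prime := by
        rw [Finset.range_add_one, Finset.filter_insert]
      have hnotmem : (n+1) ∉ (range (n+1)).filter Nat.Prime := by simp
      have hicc : ∑ m ∈ Icc 2 (n+1), (1:ℝ)/m
          = ∑ m ∈ Icc 2 n, (1:ℝ)/m + 1/((n:ℝ)+1) := by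
        rw [Finset.sum_Icc_succ_top (by omega : 2 ≤ n + 1)]
        push_cast; ring
      have hlog4 : (0:ℝ) ≤ Real.log 4 := Real.log_nonneg (by norm_num)
      set θ := ∑ p ∈ (range (n+1)).filter Nat.Prime, Real.log p with hθdef
      set S := ∑ p ∈ (range (n+1)).filter Nat.Prime, Real.log p / p with hSdef
      set H := ∑ m ∈ Icc 2 n, (1:ℝ)/m with hHdef
      have hθnn : 0 ≤ θ := Finset.sum_nonneg (fun p _ => Real.log_natCast_nonneg p)
      have hkey : θ/n ≤ (θ + Real.log 4)/((n:ℝ)+1) := by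
        rw [div_le_div_iff₀ hn hn1]
        nlinarith
      by_cases hp : (n+1).Prime
      · rw [hstep, if_pos hp, Finset.sum_insert hnotmem, Finset.sum_insert hnotmem, hicc]
        push_cast
        have e1 : (Real.log ((n:ℝ)+1) + θ)/((n:ℝ)+1)
            = θ/((n:ℝ)+1) + Real.log ((n:ℝ)+1)/((n:ℝ)+1) := by ring
        have e2 : (θ + Real.log 4)/((n:ℝ)+1) = θ/((n:ℝ)+1) + Real.log 4/((n:ℝ)+1) := by ring
        rw [e1]
        rw [e2] at hkey
        have : S ≤ θ/n + Real.log 4 * H := hih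
        have hexp : Real.log 4 * (H + 1/((n:ℝ)+1)) = Real.log 4 * H + Real.log 4/((n:ℝ)+1) := by
          ring
        rw [hexp]
        linarith
      · rw [hstep, if_neg hp, hicc]
        push_cast
        have e2 : (θ + Real.log 4)/((n:ℝ)+1) = θ/((n:ℝ)+1) + Real.log 4/((n:ℝ)+1) := by ring
        rw [e2] at hkey
        have : S ≤ θ/n + Real.log 4 * H := hih
        have hexp : Real.log 4 * (H + 1/((n:ℝ)+1)) = Real.log 4 * H + Real.log 4/((n:ℝ)+1) := by
          ring
        rw [hexp]
        have hmono : θ/((n:ℝ)+1) ≤ θ/((n:ℝ)+1) := le_refl _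
        linarith

lemma mertens_le (N : ℕ) (hN : 1 ≤ N) :
    ∑ p ∈ (range (N+1)).filter Nat.Prime, Real.log p / p
      ≤ Real.log 4 * (1 + Real.log N) := by
  have h1 := mertens_aux N hN
  have h2 := theta_le N
  have h3 := harmonic_le N
  have hn : (0:ℝ) < N := by exact_mod_cast hN
  have hlog4 : (0:ℝ) ≤ Real.log 4 := Real.log_nonneg (by norm_num)
  have h4 : (∑ p ∈ (range (N+1)).filter Nat.Prime, Real.log p) / N ≤ Real.log 4 := by
    rw [div_le_iff₀ hn]; linarith
  have h5 : Real.log 4 * ∑ m ∈ Icc 2 N, (1:ℝ)/m ≤ Real.log 4 * Real.log N :=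
    mul_le_mul_of_nonneg_left h3 hlog4
  calc _ ≤ _ := h1
    _ ≤ Real.log 4 + Real.log 4 * Real.log N := by linarith
    _ = Real.log 4 * (1 + Real.log N) := by ring

lemma sqrt_sum_aux : ∀ N : ℕ, 1 ≤ N →
    ∑ m ∈ Icc 2 N, ((m:ℝ) * Real.sqrt m)⁻¹ ≤ 2 - 2 * (Real.sqrt N)⁻¹ := by
  intro N
  induction N with
  | zero => omega
  | succ n ih =>
    intro _
    rcases Nat.lt_or_ge n 1 with h|h
    · interval_cases n
      norm_num
    · have hih := ih h
      rw [Finset.sum_Icc_succ_top (by omega : 2 ≤ n + 1)]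
      have hn : (0:ℝ) < n := by exact_mod_cast h
      have hb : (0:ℝ) < (n:ℝ)+1 := by positivity
      have hcast2 : ((n+1:ℕ):ℝ) = (n:ℝ)+1 := by push_cast; ring
      rw [hcast2]
      set s := Real.sqrt n with hs
      set t := Real.sqrt ((n:ℝ)+1) with ht
      have hs0 : 0 < s := Real.sqrt_pos.2 hn
      have ht0 : 0 < t := Real.sqrt_pos.2 hb
      have hs2 : s^2 = (n:ℝ) := Real.sq_sqrt hn.le
      have ht2 : t^2 = (n:ℝ)+1 := Real.sq_sqrt hb.le
      have hst : s ≤ t := Real.sqrt_le_sqrt (by linarith)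
      have h1 : (t - s)*(t + s) = 1 := by
        have : (t - s)*(t + s) = t^2 - s^2 := by ring
        rw [this, hs2, ht2]; ring
      have h3 : 1 ≤ 2*t*(t - s) := by nlinarith
      have h4 : t*1 ≤ t*(2*t*(t-s)) := mul_le_mul_of_nonneg_left h3 ht0.le
      have main : 0 ≤ 2*t^3 - 2*s*t^2 - s := by nlinarith
      have e : 2*s⁻¹ - 2*t⁻¹ - (((n:ℝ)+1)*t)⁻¹ = (2*t^3 - 2*s*t^2 - s)/(s*t^3) := by
        rw [← ht2]
        field_simp
      have e2 : 0 ≤ (2*t^3 - 2*s*t^2 - s)/(s*t^3) := by positivity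
      linarith

lemma sqrt_sum_le (N : ℕ) : ∑ m ∈ Icc 2 N, ((m:ℝ) * Real.sqrt m)⁻¹ ≤ 2 := by
  rcases Nat.lt_or_ge N 1 with h|h
  · interval_cases N
    norm_num
  · have hN : (0:ℝ) < Real.sqrt N := Real.sqrt_pos.2 (by exact_mod_cast h)
    have h2 : 0 ≤ 2 * (Real.sqrt N)⁻¹ := by positivity
    linarith [sqrt_sum_aux N h]

lemma rpow_neg_three_half' {x : ℝ} (hx : 0 < x) :
    x ^ (-(3/2) : ℝ) = (x * Real.sqrt x)⁻¹ := by
  rw [Real.rpow_neg hx.le]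
  congr 1
  rw [show ((3/2:ℝ)) = 1 + 1/2 by norm_num, Real.rpow_add hx, Real.rpow_one,
    ← Real.sqrt_eq_rpow]

lemma mult_prod_pow (g : ℕ → ℝ) (hg1 : g 1 = 1)
    (hg : ∀ m n, Nat.Coprime m n → g (m*n) = g m * g n) :
    ∀ (P : Finset ℕ), (∀ p ∈ P, p.Prime) → ∀ e : ℕ → ℕ,
      g (∏ p ∈ P, p ^ e p) = ∏ p ∈ P, g (p ^ e p) := by
  intro P
  classical
  induction P using Finset.induction with
  | empty => simp [hg1]
  | @insert q P hq ih =>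
    intro hprime e
    have hqp : q.Prime := hprime q (mem_insert_self q P)
    have hP : ∀ p ∈ P, p.Prime := fun p hp => hprime p (mem_insert_of_mem hp)
    have hcop : Nat.Coprime (q ^ e q) (∏ p ∈ P, p ^ e p) := by
      apply Nat.Coprime.pow_left
      apply Nat.Coprime.prod_right
      intro p hp
      exact Nat.Coprime.pow_right _ ((Nat.coprime_primes hqp (hP p hp)).2
        (fun hEq => hq (hEq ▸ hp)))
    rw [Finset.prod_insert hq, Finset.prod_insert hq, hg _ _ hcop, ih hP e]

lemma factorization_prod_eq {n : ℕ} (hn : n ≠ 0) (P : Finset ℕ)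
    (hsub : n.primeFactors ⊆ P) :
    n = ∏ p ∈ P, p ^ n.factorization p := by
  conv_lhs => rw [← Nat.factorization_prod_pow_eq_self hn]
  rw [Finsupp.prod, Nat.support_factorization]
  apply Finset.prod_subset hsub
  intro p _ hp
  rw [← Nat.support_factorization, Finsupp.notMem_support_iff] at hp
  rw [hp, pow_zero]

lemma sum_mult_le_prod (g : ℕ → ℝ) (hg0 : ∀ n, 0 ≤ g n) (hg1 : g 1 = 1)
    (hg : ∀ m n, Nat.Coprime m n → g (m*n) = g m * g n)
    (P : Finset ℕ) (hP : ∀ p ∈ P, p.Prime) (M : ℕ) (S : Finset ℕ)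
    (hS : ∀ n ∈ S, n ≠ 0 ∧ n.primeFactors ⊆ P ∧ ∀ p, n.factorization p ≤ M) :
    ∑ n ∈ S, g n ≤ ∏ p ∈ P, ∑ l ∈ range (M+1), g (p ^ l) := by
  classical
  have hfact : ∀ n ∈ S, n = ∏ p ∈ P, p ^ n.factorization p := fun n hn =>
    factorization_prod_eq (hS n hn).1 P (hS n hn).2.1
  have hgn : ∀ n ∈ S, g n = ∏ x ∈ P.attach, g (x.1 ^ n.factorization x.1) := by
    intro n hn
    rw [Finset.prod_attach P (fun p => g (p ^ n.factorization p))]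
    conv_lhs => rw [hfact n hn]
    exact mult_prod_pow g hg1 hg P hP _
  rw [Finset.prod_sum]
  set ι : ℕ → (∀ a, a ∈ P → ℕ) := fun n => fun p _ => n.factorization p with hι
  have hinj : ∀ n ∈ S, ∀ m ∈ S, ι n = ι m → n = m := by
    intro n hn m hm hEq
    rw [hfact n hn, hfact m hm]
    apply Finset.prod_congr rfl
    intro p hp
    have := congrFun (congrFun hEq p) hp
    simp only [ι] at this
    rw [this]
  calc ∑ n ∈ S, g n = ∑ n ∈ S, ∏ x ∈ P.attach, g (x.1 ^ n.factorization x.1) :=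
        Finset.sum_congr rfl hgn
    _ = ∑ σ ∈ S.image ι, ∏ x ∈ P.attach, g (x.1 ^ σ x.1 x.2) := by
        rw [Finset.sum_image hinj]
    _ ≤ ∑ σ ∈ P.pi (fun _ => range (M+1)), ∏ x ∈ P.attach, g (x.1 ^ σ x.1 x.2) := by
        apply Finset.sum_le_sum_of_subset_of_nonneg
        · intro σ hσ
          rw [Finset.mem_image] at hσ
          obtain ⟨n, hn, rfl⟩ := hσ
          rw [Finset.mem_pi]
          intro a ha
          rw [Finset.mem_range]
          exact Nat.lt_succ_of_le ((hS n hn).2.2 a)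
        · intro σ _ _
          exact Finset.prod_nonneg (fun x _ => hg0 _)

lemma geo_tail_aux {q : ℝ} (hq0 : 0 ≤ q) (hq : q ≤ 1/2) :
    ∀ N : ℕ, 1 ≤ N → ∑ l ∈ Icc 2 N, q^l ≤ 2*q^2 - 2*q^(N+1) := by
  intro N
  induction N with
  | zero => omega
  | succ n ih =>
    intro _
    rcases Nat.lt_or_ge n 1 with h|h
    · interval_cases n
      norm_num
    · have hih := ih h
      rw [Finset.sum_Icc_succ_top (by omega : 2 ≤ n + 1)]
      have h1 : 2*q^(n+1+1) ≤ q^(n+1) := by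
        have : q^(n+1+1) = q * q^(n+1) := by ring
        rw [this]
        nlinarith [pow_nonneg hq0 (n+1)]
      linarith

lemma geo_tail {q : ℝ} (hq0 : 0 ≤ q) (hq : q ≤ 1/2) (N : ℕ) :
    ∑ l ∈ Icc 2 N, q^l ≤ 2*q^2 := by
  rcases Nat.lt_or_ge N 1 with h|h
  · interval_cases N
    simp
    positivity
  · have := geo_tail_aux hq0 hq N h
    have h2 : 0 ≤ q^(N+1) := pow_nonneg hq0 _
    linarith

lemma factor_bound (f : ℕ → ℝ) (hf0 : ∀ n, 0 ≤ f n) (hf1 : f 1 = 1)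
    (A1 : ℝ) (hA1 : 0 < A1) (δ : ℝ) (hδ34 : 3/4 ≤ δ) (hδ1 : δ ≤ 1)
    (p : ℕ) (hp : p.Prime) (hfp : ∀ l : ℕ, 1 ≤ l → f (p^l) ≤ A1^l)
    (hbig : 2*A1+2 ≤ Real.sqrt p) (N : ℕ) :
    ∑ l ∈ range (N+1), f (p^l) * ((p^l : ℕ):ℝ) ^ (-δ) ≤
      Real.exp (f p / (p:ℝ) + A1*((p:ℝ)^(-δ) - (p:ℝ)⁻¹)
        + 2*A1^2*((p:ℝ)*Real.sqrt p)⁻¹) := by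
  have hp1 : (1:ℝ) ≤ p := by exact_mod_cast hp.one_lt.le
  have hppos : (0:ℝ) < p := lt_of_lt_of_le one_pos hp1
  have hsq : Real.sqrt p ≤ (p:ℝ)^δ := by
    calc Real.sqrt p = (p:ℝ) ^ ((1:ℝ)/2) := Real.sqrt_eq_rpow _
      _ ≤ (p:ℝ)^δ := Real.rpow_le_rpow_of_exponent_le hp1 (by linarith)
  have hsqpos : 0 < Real.sqrt p := Real.sqrt_pos.2 hppos
  have hpδpos : (0:ℝ) < (p:ℝ)^δ := Real.rpow_pos_of_pos hppos δ
  have hpnegδ : (p:ℝ)^(-δ) = ((p:ℝ)^δ)⁻¹ := by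
    rw [Real.rpow_neg hppos.le]
  set q : ℝ := A1 * (p:ℝ)^(-δ) with hqdef
  have hq0 : 0 ≤ q := by positivity
  have hq12 : q ≤ 1/2 := by
    have h1 : ((p:ℝ)^δ)⁻¹ ≤ (Real.sqrt p)⁻¹ := inv_anti₀ hsqpos hsq
    have h2 : (Real.sqrt p)⁻¹ ≤ (2*A1+2)⁻¹ :=
      inv_anti₀ (by positivity) hbig
    have h3 : q ≤ A1 * (2*A1+2)⁻¹ := by
      rw [hqdef, hpnegδ]
      exact mul_le_mul_of_nonneg_left (le_trans h1 h2) hA1.le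
    have h4 : (2*A1+2) * (2*A1+2)⁻¹ = 1 := mul_inv_cancel₀ (by positivity)
    nlinarith [inv_nonneg.2 (by positivity : (0:ℝ) ≤ 2*A1+2)]
  have hinv : (p:ℝ)⁻¹ ≤ (p:ℝ)^(-δ) := by
    calc (p:ℝ)⁻¹ = (p:ℝ)^(-1:ℝ) := (Real.rpow_neg_one _).symm
      _ ≤ (p:ℝ)^(-δ) := Real.rpow_le_rpow_of_exponent_le hp1 (by linarith)
  have hterm : ∀ l : ℕ, 1 ≤ l → f (p^l) * ((p^l : ℕ):ℝ) ^ (-δ) ≤ q^l := by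
    intro l hl
    have hc : ((p^l : ℕ):ℝ) = (p:ℝ)^l := by push_cast; ring
    have hc2 : ((p:ℝ)^l) ^ (-δ) = ((p:ℝ)^(-δ))^l := by
      rw [← Real.rpow_natCast_mul hppos.le, mul_comm, Real.rpow_mul_natCast hppos.le]
    rw [hc, hc2, hqdef, mul_pow]
    exact mul_le_mul_of_nonneg_right (hfp l hl)
      (pow_nonneg (Real.rpow_nonneg hppos.le _) l)
  have hexp0 : 0 ≤ f p / (p:ℝ) + A1*((p:ℝ)^(-δ) - (p:ℝ)⁻¹)
      + 2*A1^2*((p:ℝ)*Real.sqrt p)⁻¹ := by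
    have h1 : 0 ≤ f p / (p:ℝ) := div_nonneg (hf0 p) hppos.le
    have h2 : 0 ≤ A1*((p:ℝ)^(-δ) - (p:ℝ)⁻¹) :=
      mul_nonneg hA1.le (by linarith)
    have h3 : 0 ≤ 2*A1^2*((p:ℝ)*Real.sqrt p)⁻¹ := by positivity
    linarith
  have hsplit : range (N+1) = insert 0 (Icc 1 N) := by
    ext a
    simp [Nat.lt_succ_iff]
    omega
  have h0notin : (0:ℕ) ∉ Icc 1 N := by simp
  rw [hsplit, Finset.sum_insert h0notin]
  have hzeroterm : f (p^0) * ((p^0 : ℕ):ℝ) ^ (-δ) = 1 := by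
    rw [pow_zero, hf1]
    norm_num
  rw [hzeroterm]
  rcases Nat.lt_or_ge N 1 with hN|hN
  · interval_cases N
    rw [show Icc 1 0 = (∅ : Finset ℕ) by simp, Finset.sum_empty, add_zero]
    exact Real.one_le_exp hexp0
  · have hicc : Icc 1 N = insert 1 (Icc 2 N) := by
      ext a
      simp
      omega
    have h1notin : (1:ℕ) ∉ Icc 2 N := by simp
    rw [hicc, Finset.sum_insert h1notin]
    have hone : f (p^1) * ((p^1 : ℕ):ℝ) ^ (-δ) = f p * (p:ℝ)^(-δ) := by
      norm_num
    have htail : ∑ l ∈ Icc 2 N, f (p^l) * ((p^l : ℕ):ℝ) ^ (-δ) ≤ 2*q^2 := by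
      calc ∑ l ∈ Icc 2 N, f (p^l) * ((p^l : ℕ):ℝ) ^ (-δ) ≤ ∑ l ∈ Icc 2 N, q^l :=
            Finset.sum_le_sum (fun l hl => hterm l (by simp at hl; omega))
        _ ≤ 2*q^2 := geo_tail hq0 hq12 N
    have hfirst : f p * (p:ℝ)^(-δ) ≤ f p / (p:ℝ) + A1*((p:ℝ)^(-δ) - (p:ℝ)⁻¹) := by
      have hfpA : f p ≤ A1 := by
        have := hfp 1 (le_refl 1)
        rwa [pow_one, pow_one] at this
      have h2 : f p * ((p:ℝ)^(-δ) - (p:ℝ)⁻¹) ≤ A1 * ((p:ℝ)^(-δ) - (p:ℝ)⁻¹) :=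
        mul_le_mul_of_nonneg_right hfpA (by linarith)
      have h3 : f p * (p:ℝ)⁻¹ = f p / (p:ℝ) := (div_eq_mul_inv _ _).symm
      nlinarith
    have hqq : 2*q^2 ≤ 2*A1^2*((p:ℝ)*Real.sqrt p)⁻¹ := by
      have h1 : (p:ℝ)^(-δ) ≤ (p:ℝ)^(-(3/4):ℝ) :=
        Real.rpow_le_rpow_of_exponent_le hp1 (by linarith)
      have h2 : ((p:ℝ)^(-δ))^2 ≤ ((p:ℝ)^(-(3/4):ℝ))^2 := by
        apply pow_le_pow_left₀ (Real.rpow_nonneg hppos.le _) h1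
      have h3 : ((p:ℝ)^(-(3/4):ℝ))^2 = (p:ℝ)^(-(3/2):ℝ) := by
        rw [sq, ← Real.rpow_add hppos]
        norm_num
      have h4 : (p:ℝ)^(-(3/2):ℝ) = ((p:ℝ)*Real.sqrt p)⁻¹ := rpow_neg_three_half' hppos
      have h5 : q^2 = A1^2 * ((p:ℝ)^(-δ))^2 := by rw [hqdef]; ring
      rw [h5]
      nlinarith [sq_nonneg A1]
    have hlast : 1 + (f p * (p:ℝ)^(-δ) + 2*q^2)
        ≤ Real.exp (f p / (p:ℝ) + A1*((p:ℝ)^(-δ) - (p:ℝ)⁻¹)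
          + 2*A1^2*((p:ℝ)*Real.sqrt p)⁻¹) := by
      set E := f p / (p:ℝ) + A1*((p:ℝ)^(-δ) - (p:ℝ)⁻¹) + 2*A1^2*((p:ℝ)*Real.sqrt p)⁻¹
        with hEdef
      have h6 : 1 + (f p * (p:ℝ)^(-δ) + 2*q^2) ≤ 1 + E := by
        rw [hEdef]
        linarith
      have h7 : E + 1 ≤ Real.exp E := Real.add_one_le_exp E
      linarith
    rw [hone]
    linarith

end ShiuAux

set_option maxHeartbeats 2000000 in
open ShiuAux in
/-- Shiu's Lemma 4 with `δ = 1 - (1 - (5/4)β) r log r / log z` (inequality (8.2)):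
for `f ∈ M` and `0 < β ≤ 1/164`. -/
theorem shiu_lemma4_variant (β : ℝ) (hβ : 0 < β) (hβ' : β ≤ 1/164)
    (A1 : ℝ) (hA1 : 0 < A1) (A2 : ℝ → ℝ) :
    ∃ C : ℝ, 0 < C ∧ ∃ z0 : ℝ, ∀ z : ℝ, z0 ≤ z → ∀ x : ℝ, z ≤ x →
      ∀ f : ℕ → ℝ, MultNonneg f → InM f A1 A2 →
      ∀ k : ℕ, 1 ≤ k →
      ∀ r : ℝ, 1 ≤ r → r ≤ Real.log z / (4 * Real.log (Real.log z)) →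
      (∑' n : ℕ, if z ^ ((2 : ℝ)⁻¹) ≤ (n : ℝ) ∧ Nat.Coprime n k ∧
            JRough (Jval x β) n ∧ (∀ p ∈ n.primeFactors, (p : ℝ) ≤ z ^ r⁻¹)
          then f n / (n : ℝ) else 0)
        ≤ C * Real.exp (-(1/2) * (1 - 5/4 * β) * r * Real.log r
            + ∑ p ∈ (Finset.Icc 1 ⌊z⌋₊).filter
                (fun p : ℕ => p.Prime ∧ ¬ p ∣ k), f p / (p : ℝ)) := by
  classical
  obtain ⟨R1, hR1def⟩ : ∃ v : ℝ, v = (32*A1/β) ^ (β⁻¹ : ℝ) := ⟨_, rfl⟩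
  have hR1nn : 0 ≤ R1 := hR1def ▸ Real.rpow_nonneg (by positivity) _
  obtain ⟨C1, hC1def⟩ : ∃ v : ℝ, v = 4*A1*R1^2 + 4*A1^2 + 1 := ⟨_, rfl⟩
  have hC1nn : 1 ≤ C1 := by
    rw [hC1def]
    nlinarith [mul_nonneg (mul_nonneg (by norm_num : (0:ℝ) ≤ 4) hA1.le) (sq_nonneg R1),
      sq_nonneg A1]
  refine ⟨Real.exp C1, Real.exp_pos _, ?_⟩
  obtain ⟨Mc, hMcdef⟩ : ∃ v : ℝ, v = (2*A1+2)^4 + 9 := ⟨_, rfl⟩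
  have hMc9 : 9 ≤ Mc := by
    rw [hMcdef]
    nlinarith [pow_nonneg (by positivity : (0:ℝ) ≤ 2*A1+2) 4]
  have hMc1 : 1 ≤ Mc := by linarith
  have hMcpow : ((2*A1+2)^2)^2 ≤ Mc := by
    rw [hMcdef, ← pow_mul]
    norm_num
  refine ⟨Real.exp (Real.exp Mc), ?_⟩
  intro z hz x hx f hf hM k hk r hr1 hr2
  obtain ⟨hf0, hf1, hfmul⟩ := hf
  have hzpos : 0 < z := lt_of_lt_of_le (Real.exp_pos _) hz
  have hz1 : 1 ≤ z := le_trans (Real.one_le_exp (Real.exp_pos _).le) hz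
  obtain ⟨L, hLdef⟩ : ∃ v : ℝ, v = Real.log z := ⟨_, rfl⟩
  have hLge : Real.exp Mc ≤ L := hLdef ▸ (Real.le_log_iff_exp_le hzpos).2 hz
  have hLpos : 0 < L := lt_of_lt_of_le (Real.exp_pos _) hLge
  obtain ⟨LL, hLLdef⟩ : ∃ v : ℝ, v = Real.log L := ⟨_, rfl⟩
  have hLLge : Mc ≤ LL := by
    rw [hLLdef]
    exact (Real.le_log_iff_exp_le hLpos).2 hLge
  have hLL9 : 9 ≤ LL := le_trans hMc9 hLLge
  have hLLpos : 0 < LL := by linarith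
  have hrpos : 0 < r := lt_of_lt_of_le one_pos hr1
  have hlogr0 : 0 ≤ Real.log r := Real.log_nonneg hr1
  rw [← hLdef] at hr2
  rw [← hLLdef] at hr2
  have hr2' : r * (4*LL) ≤ L := (le_div_iff₀ (by positivity)).1 hr2
  have hrL : r ≤ L := by nlinarith
  have hlogrLL : Real.log r ≤ LL := by
    rw [hLLdef]
    exact Real.log_le_log hrpos (hLdef ▸ hrL)
  have hrlogr0 : 0 ≤ r * Real.log r := mul_nonneg hrpos.le hlogr0
  have hrlogr4 : r * Real.log r ≤ L/4 := by nlinarith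
  obtain ⟨δ, hδdef⟩ : ∃ v : ℝ, v = 1 - (1-β)*(r*Real.log r)/L := ⟨_, rfl⟩
  have hβ12 : β ≤ 1/2 := by linarith
  have h1mδeq : 1 - δ = (1-β)*(r*Real.log r)/L := by rw [hδdef]; ring
  have h1mδ0 : 0 ≤ 1 - δ := by
    rw [h1mδeq]
    exact div_nonneg (mul_nonneg (by linarith) hrlogr0) hLpos.le
  have h1mδ14 : 1 - δ ≤ 1/4 := by
    rw [h1mδeq, div_le_iff₀ hLpos]
    nlinarith
  have hδ34 : 3/4 ≤ δ := by linarith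
  have hδ1 : δ ≤ 1 := by linarith
  have hδpos : 0 < δ := by linarith
  obtain ⟨y, hydef⟩ : ∃ v : ℝ, v = z ^ (r⁻¹ : ℝ) := ⟨_, rfl⟩
  have hlogy : Real.log y = L / r := by
    rw [hydef, Real.log_rpow hzpos, ← hLdef, inv_eq_one_div]
    ring
  have hlogy4 : 4*LL ≤ Real.log y := by
    rw [hlogy, le_div_iff₀ hrpos]
    linarith
  have hlogypos : 0 < Real.log y := by linarith
  have hlogy1 : 1 ≤ Real.log y := by linarith
  have hy1 : 1 ≤ y := hydef ▸ Real.one_le_rpow hz1 (by positivity)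
  have hypos : 0 < y := by linarith
  have hrinv1 : (r⁻¹:ℝ) ≤ 1 := by
    rw [inv_eq_one_div, div_le_one hrpos]
    exact hr1
  have hyz : y ≤ z := by
    calc y = z ^ (r⁻¹:ℝ) := hydef
      _ ≤ z ^ (1:ℝ) := Real.rpow_le_rpow_of_exponent_le hz1 hrinv1
      _ = z := Real.rpow_one z
  -- the J bound
  have hJbig : (2*A1+2)^2 ≤ Jval x β := by
    have hlx : L ≤ Real.log x := hLdef ▸ Real.log_le_log hzpos hx
    have hMcllx : Mc ≤ Real.log (Real.log x) := by
      have h0 : LL ≤ Real.log (Real.log x) := by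
        rw [hLLdef, hLdef]
        exact Real.log_le_log (hLdef ▸ hLpos) (hLdef ▸ hlx)
      linarith
    have h2 : Mc ^ ((1:ℝ) - β) ≤ Real.log (Real.log x) ^ ((1:ℝ) - β) :=
      Real.rpow_le_rpow (by linarith) hMcllx (by linarith)
    have h3 : Mc ^ ((1:ℝ)/2) ≤ Mc ^ ((1:ℝ) - β) :=
      Real.rpow_le_rpow_of_exponent_le hMc1 (by linarith)
    have h5 : (2*A1+2)^2 ≤ Real.sqrt Mc := by
      have h6 : Real.sqrt (((2*A1+2)^2)^2) ≤ Real.sqrt Mc := Real.sqrt_le_sqrt hMcpow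
      rwa [Real.sqrt_sq (by positivity)] at h6
    calc (2*A1+2)^2 ≤ Real.sqrt Mc := h5
      _ = Mc ^ ((1:ℝ)/2) := Real.sqrt_eq_rpow Mc
      _ ≤ Mc ^ ((1:ℝ) - β) := h3
      _ ≤ Real.log (Real.log x) ^ ((1:ℝ) - β) := h2
      _ = Jval x β := rfl
  -- the weight value
  have hz12ge1 : (1:ℝ) ≤ z ^ ((2:ℝ)⁻¹) := Real.one_le_rpow hz1 (by norm_num)
  have hz12pos : (0:ℝ) < z ^ ((2:ℝ)⁻¹) := by linarith
  obtain ⟨W, hWdef⟩ : ∃ v : ℝ, v = (z ^ ((2:ℝ)⁻¹)) ^ (δ - 1) := ⟨_, rfl⟩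
  have hWval : W = Real.exp (-(1/2)*((1-β)*(r*Real.log r))) := by
    rw [hWdef, ← Real.rpow_mul hzpos.le, Real.rpow_def_of_pos hzpos]
    congr 1
    rw [← hLdef, hδdef]
    field_simp
    ring
  have hWpos : 0 < W := by
    rw [hWval]
    exact Real.exp_pos _
  -- the key finite-sum bound
  have key : ∀ S : Finset ℕ, ∀ N : ℕ,
      (∀ n ∈ S, n < N ∧ (z ^ ((2:ℝ)⁻¹) ≤ (n:ℝ) ∧ Nat.Coprime n k ∧
        JRough (Jval x β) n ∧ (∀ p ∈ n.primeFactors, (p:ℝ) ≤ z ^ (r⁻¹:ℝ)))) →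
      ∑ n ∈ S, f n / (n:ℝ)
        ≤ Real.exp C1 * Real.exp (-(1/2) * (1 - 5/4 * β) * r * Real.log r
            + ∑ p ∈ (Finset.Icc 1 ⌊z⌋₊).filter
                (fun p : ℕ => p.Prime ∧ ¬ p ∣ k), f p / (p : ℝ)) := by
    intro S N hS
    obtain ⟨g, hgdef⟩ : ∃ v : ℕ → ℝ, v = fun n : ℕ => f n * (n:ℝ) ^ (-δ) := ⟨_, rfl⟩
    have hgapp : ∀ n : ℕ, g n = f n * (n:ℝ) ^ (-δ) := fun n => by rw [hgdef]
    have hg0 : ∀ n, 0 ≤ g n := by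
      intro n
      rw [hgapp]
      exact mul_nonneg (hf0 n) (Real.rpow_nonneg (Nat.cast_nonneg n) _)
    have hg1 : g 1 = 1 := by
      rw [hgapp, hf1]
      norm_num
    have hgmul : ∀ m n : ℕ, Nat.Coprime m n → g (m*n) = g m * g n := by
      intro m n hmn
      rcases Nat.eq_zero_or_pos m with hm|hm
      · subst hm
        have hn1 : n = 1 := by simpa using hmn
        subst hn1
        simp [hgapp, hf1]
      rcases Nat.eq_zero_or_pos n with hn|hn
      · subst hn
        have hm1 : m = 1 := by simpa using hmn
        subst hm1
        simp [hgapp, hf1]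
      · have hmpos : (0:ℝ) < m := by exact_mod_cast hm
        have hnpos : (0:ℝ) < n := by exact_mod_cast hn
        simp only [hgapp]
        rw [hfmul m n hmn, Nat.cast_mul, Real.mul_rpow hmpos.le hnpos.le]
        ring
    -- the prime set
    obtain ⟨P, hPdef⟩ : ∃ v : Finset ℕ,
        v = ((Finset.Icc 1 ⌊z⌋₊).filter (fun p : ℕ => p.Prime ∧ ¬ p ∣ k)).filter
          (fun p : ℕ => Jval x β < (p:ℝ) ∧ (p:ℝ) ≤ y) := ⟨_, rfl⟩
    have hPmem : ∀ p ∈ P, (1 ≤ p ∧ p ≤ ⌊z⌋₊) ∧ (p.Prime ∧ ¬ p ∣ k) ∧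
        (Jval x β < (p:ℝ) ∧ (p:ℝ) ≤ y) := by
      intro p hp
      rw [hPdef, Finset.mem_filter, Finset.mem_filter, Finset.mem_Icc] at hp
      exact ⟨hp.1.1, hp.1.2, hp.2⟩
    have hPprime : ∀ p ∈ P, p.Prime := fun p hp => (hPmem p hp).2.1.1
    -- membership conditions for S
    have hScond : ∀ n ∈ S, n ≠ 0 ∧ n.primeFactors ⊆ P ∧ ∀ q : ℕ, n.factorization q ≤ N := by
      intro n hn
      obtain ⟨hnN, hnz, hcop, hrough, hsmooth⟩ := hS n hn
      have hn1 : 1 ≤ n := by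
        have h0 : (1:ℝ) ≤ (n:ℝ) := le_trans hz12ge1 hnz
        exact_mod_cast h0
      refine ⟨by omega, ?_, ?_⟩
      · intro q hq
        have hqp : q.Prime := Nat.prime_of_mem_primeFactors hq
        have hqdvd : q ∣ n := Nat.dvd_of_mem_primeFactors hq
        have hqJ : Jval x β < (q:ℝ) := hrough q hq
        have hqy : (q:ℝ) ≤ y := by
          have := hsmooth q hq
          rw [← hydef] at this
          exact this
        have hqk : ¬ q ∣ k := by
          intro hdvd
          have hgcd : q ∣ Nat.gcd n k := Nat.dvd_gcd hqdvd hdvd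
          rw [Nat.Coprime] at hcop
          rw [hcop] at hgcd
          exact absurd (Nat.dvd_one.mp hgcd) hqp.one_lt.ne'
        have hqfloor : q ≤ ⌊z⌋₊ := Nat.le_floor (le_trans hqy hyz)
        rw [hPdef, Finset.mem_filter, Finset.mem_filter, Finset.mem_Icc]
        exact ⟨⟨⟨hqp.one_lt.le.trans' (by norm_num), hqfloor⟩, hqp, hqk⟩, hqJ, hqy⟩
      · intro q
        have h1 := Nat.factorization_lt q (show n ≠ 0 by omega)
        omega
    -- Step A : Rankin's trick
    have hstepA : ∑ n ∈ S, f n / (n:ℝ) ≤ W * ∑ n ∈ S, g n := by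
      rw [Finset.mul_sum]
      apply Finset.sum_le_sum
      intro n hn
      obtain ⟨hnN, hnz, _, _, _⟩ := hS n hn
      have hn1 : (1:ℝ) ≤ (n:ℝ) := le_trans hz12ge1 hnz
      have hnpos : (0:ℝ) < (n:ℝ) := by linarith
      have hsplit : f n / (n:ℝ) = g n * (n:ℝ)^(δ-1) := by
        rw [hgapp, div_eq_mul_inv, mul_assoc, ← Real.rpow_add hnpos,
          show -δ + (δ-1) = (-1:ℝ) by ring, Real.rpow_neg_one]
      rw [hsplit]
      have hmono : (n:ℝ)^(δ-1) ≤ (z ^ ((2:ℝ)⁻¹))^(δ-1) :=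
        Real.rpow_le_rpow_of_nonpos hz12pos hnz (by linarith)
      calc g n * (n:ℝ)^(δ-1) ≤ g n * (z ^ ((2:ℝ)⁻¹))^(δ-1) :=
            mul_le_mul_of_nonneg_left hmono (hg0 n)
        _ = W * g n := by rw [hWdef]; ring
    -- Step B : multiplicative bound
    have hstepB : ∑ n ∈ S, g n ≤ ∏ p ∈ P, ∑ l ∈ range (N+1), g (p ^ l) :=
      sum_mult_le_prod g hg0 hg1 hgmul P hPprime N S hScond
    -- Step C : bounding each Euler factor
    have hstepC : ∀ p ∈ P, ∑ l ∈ range (N+1), g (p ^ l)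
        ≤ Real.exp (f p / (p:ℝ) + A1*((p:ℝ)^(-δ) - (p:ℝ)⁻¹)
            + 2*A1^2*((p:ℝ)*Real.sqrt p)⁻¹) := by
      intro p hp
      have hpp : p.Prime := hPprime p hp
      have hbig : 2*A1+2 ≤ Real.sqrt p := by
        have h1 : (2*A1+2)^2 ≤ (p:ℝ) := le_trans hJbig (hPmem p hp).2.2.1.le
        have h2 : Real.sqrt ((2*A1+2)^2) ≤ Real.sqrt p := Real.sqrt_le_sqrt h1
        rwa [Real.sqrt_sq (by positivity)] at h2
      have heq : ∑ l ∈ range (N+1), g (p ^ l)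
          = ∑ l ∈ range (N+1), f (p^l) * ((p^l : ℕ):ℝ) ^ (-δ) := by
        apply Finset.sum_congr rfl
        intro l _
        rw [hgapp]
      rw [heq]
      exact factor_bound f hf0 hf1 A1 hA1 δ hδ34 hδ1 p hpp (hM.1 p hpp) hbig N
    -- Step D : product to exp of sum
    have hstepD : ∏ p ∈ P, ∑ l ∈ range (N+1), g (p ^ l)
        ≤ Real.exp (∑ p ∈ P, (f p / (p:ℝ) + A1*((p:ℝ)^(-δ) - (p:ℝ)⁻¹)
            + 2*A1^2*((p:ℝ)*Real.sqrt p)⁻¹)) := by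
      rw [Real.exp_sum]
      exact Finset.prod_le_prod
        (fun p _ => Finset.sum_nonneg fun l _ => hg0 _) hstepC
    -- bounding the sum of exponents
    have hsum_fp : ∑ p ∈ P, f p / (p:ℝ)
        ≤ ∑ p ∈ (Finset.Icc 1 ⌊z⌋₊).filter (fun p : ℕ => p.Prime ∧ ¬ p ∣ k), f p / (p:ℝ) := by
      rw [hPdef]
      exact Finset.sum_le_sum_of_subset_of_nonneg (Finset.filter_subset _ _)
        (fun p _ _ => div_nonneg (hf0 p) (Nat.cast_nonneg p))
    -- Mertens bound
    have hlog4 : Real.log 4 ≤ 5/3 := by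
      rw [Real.log_le_iff_le_exp (by norm_num)]
      have h5 : Real.exp (5/3 : ℝ) = Real.exp 1 * Real.exp (2/3) := by
        rw [← Real.exp_add]; norm_num
      have h23 : (1:ℝ) + 2/3 ≤ Real.exp (2/3) := by
        have := Real.add_one_le_exp (2/3 : ℝ); linarith
      have h6 := Real.exp_one_gt_d9
      have h7 : (2.7182818283:ℝ) * (1+2/3) ≤ Real.exp 1 * Real.exp (2/3) :=
        mul_le_mul h6.le h23 (by norm_num) (le_trans (by norm_num) h6.le)
      linarith
    have hmert : ∑ p ∈ P, Real.log p / (p:ℝ) ≤ (10/3) * Real.log y := by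
      have hfl1 : 1 ≤ ⌊y⌋₊ := Nat.le_floor (by exact_mod_cast hy1)
      have hsub : P ⊆ (range (⌊y⌋₊+1)).filter Nat.Prime := by
        intro p hp
        rw [Finset.mem_filter, Finset.mem_range]
        exact ⟨Nat.lt_succ_of_le (Nat.le_floor (hPmem p hp).2.2.2), hPprime p hp⟩
      have h1 : ∑ p ∈ P, Real.log p / (p:ℝ)
          ≤ ∑ p ∈ (range (⌊y⌋₊+1)).filter Nat.Prime, Real.log p / (p:ℝ) :=
        Finset.sum_le_sum_of_subset_of_nonneg hsub
          (fun p _ _ => div_nonneg (Real.log_natCast_nonneg p) (Nat.cast_nonneg p))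
      have h2 := mertens_le ⌊y⌋₊ hfl1
      have hflpos : (0:ℝ) < (⌊y⌋₊:ℝ) := by exact_mod_cast hfl1
      have h3 : Real.log (⌊y⌋₊:ℝ) ≤ Real.log y :=
        Real.log_le_log hflpos (Nat.floor_le hypos.le)
      have hlog40 : (0:ℝ) ≤ Real.log 4 := Real.log_nonneg (by norm_num)
      have hb0 : (0:ℝ) ≤ 1 + Real.log (⌊y⌋₊:ℝ) := by
        have := Real.log_natCast_nonneg ⌊y⌋₊
        linarith
      have hb1 : 1 + Real.log (⌊y⌋₊:ℝ) ≤ 2*Real.log y := by linarith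
      have hb2 : Real.log 4 * (1 + Real.log (⌊y⌋₊:ℝ)) ≤ (5/3) * (2*Real.log y) :=
        mul_le_mul hlog4 hb1 hb0 (by norm_num)
      calc ∑ p ∈ P, Real.log p / (p:ℝ)
          ≤ Real.log 4 * (1 + Real.log (⌊y⌋₊:ℝ)) := le_trans h1 h2
        _ ≤ (5/3) * (2 * Real.log y) := hb2
        _ = (10/3) * Real.log y := by ring
    -- the E_b piece
    obtain ⟨ρ, hρdef⟩ : ∃ v : ℝ, v = Real.exp ((1-β)*Real.log r) := ⟨_, rfl⟩
    have hρpos : 0 < ρ := hρdef ▸ Real.exp_pos _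
    have hρr : ρ ≤ r := by
      rw [hρdef]
      calc Real.exp ((1-β)*Real.log r) ≤ Real.exp (1*Real.log r) :=
          Real.exp_le_exp.2 (by linarith [mul_nonneg hβ.le hlogr0])
        _ = r := by rw [one_mul, Real.exp_log hrpos]
    have hUeq : (1-δ) * Real.log y = (1-β)*Real.log r := by
      rw [h1mδeq, hlogy]
      field_simp
    have hUb : ∀ p ∈ P, (p:ℝ)^(-δ) - (p:ℝ)⁻¹ ≤ (1-δ) * ρ * (Real.log p / (p:ℝ)) := by
      intro p hp
      have hpy : (p:ℝ) ≤ y := (hPmem p hp).2.2.2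
      have hp1 : (1:ℝ) ≤ p := by exact_mod_cast (hPprime p hp).one_lt.le
      have hppos : (0:ℝ) < p := by linarith
      have hu0 : 0 ≤ (1-δ) * Real.log p := mul_nonneg h1mδ0 (Real.log_nonneg hp1)
      have huU : (1-δ) * Real.log p ≤ (1-β)*Real.log r := by
        rw [← hUeq]
        exact mul_le_mul_of_nonneg_left (Real.log_le_log hppos hpy) h1mδ0
      have hid : (p:ℝ)^(-δ) = Real.exp ((1-δ) * Real.log p) * (p:ℝ)⁻¹ := by
        rw [Real.rpow_def_of_pos hppos,
          show ((p:ℝ))⁻¹ = Real.exp (-(Real.log p)) by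
            rw [Real.exp_neg, Real.exp_log hppos],
          ← Real.exp_add]
        congr 1
        ring
      have hexpu : Real.exp ((1-δ) * Real.log p) - 1 ≤ ((1-δ) * Real.log p) * ρ := by
        have h1 := Real.add_one_le_exp (-((1-δ) * Real.log p))
        have h2 : (1 - (1-δ) * Real.log p) * Real.exp ((1-δ) * Real.log p) ≤ 1 := by
          have h3 := mul_le_mul_of_nonneg_right h1 (Real.exp_pos ((1-δ) * Real.log p)).le
          rwa [← Real.exp_add, neg_add_cancel, Real.exp_zero,
            show (-((1-δ) * Real.log p) + 1) = (1 - (1-δ) * Real.log p) by ring] at h3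
        have h4 : ((1-δ) * Real.log p) * Real.exp ((1-δ) * Real.log p)
            ≤ ((1-δ) * Real.log p) * ρ := by
          apply mul_le_mul_of_nonneg_left _ hu0
          rw [hρdef]
          exact Real.exp_le_exp.2 huU
        linarith
      calc (p:ℝ)^(-δ) - (p:ℝ)⁻¹
          = (Real.exp ((1-δ) * Real.log p) - 1) * (p:ℝ)⁻¹ := by rw [hid]; ring
        _ ≤ (((1-δ) * Real.log p) * ρ) * (p:ℝ)⁻¹ :=
            mul_le_mul_of_nonneg_right hexpu (by positivity)
        _ = (1-δ) * ρ * (Real.log p / (p:ℝ)) := by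
            field_simp
    have hEb : A1 * ∑ p ∈ P, ((p:ℝ)^(-δ) - (p:ℝ)⁻¹) ≤ 4*A1*(ρ*Real.log r) := by
      have h1 : ∑ p ∈ P, ((p:ℝ)^(-δ) - (p:ℝ)⁻¹)
          ≤ (1-δ)*ρ * ∑ p ∈ P, Real.log p/(p:ℝ) := by
        rw [Finset.mul_sum]
        apply Finset.sum_le_sum
        intro p hp
        have := hUb p hp
        linarith [hUb p hp]
      have h2 : (1-δ)*ρ * ∑ p ∈ P, Real.log p/(p:ℝ) ≤ (1-δ)*ρ*((10/3)*Real.log y) :=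
        mul_le_mul_of_nonneg_left hmert (mul_nonneg h1mδ0 hρpos.le)
      have h3 : (1-δ)*ρ*((10/3)*Real.log y) = (10/3)*ρ*((1-δ)*Real.log y) := by ring
      have h4 : (1-δ)*ρ*((10/3)*Real.log y) ≤ 4*(ρ*Real.log r) := by
        rw [h3, hUeq]
        have hx1 : 0 ≤ ρ*Real.log r := mul_nonneg hρpos.le hlogr0
        have hx2 : 0 ≤ β*(ρ*Real.log r) := mul_nonneg hβ.le hx1
        linarith [hx1, hx2]
      have h5 : ∑ p ∈ P, ((p:ℝ)^(-δ) - (p:ℝ)⁻¹) ≤ 4*(ρ*Real.log r) := by linarith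
      calc A1 * ∑ p ∈ P, ((p:ℝ)^(-δ) - (p:ℝ)⁻¹) ≤ A1 * (4*(ρ*Real.log r)) :=
          mul_le_mul_of_nonneg_left h5 hA1.le
        _ = 4*A1*(ρ*Real.log r) := by ring
    have hcrit : 4*A1*(ρ*Real.log r) ≤ β/8 * (r*Real.log r) + 4*A1*R1^2 := by
      by_cases hcase : 4*A1*ρ ≤ β/8 * r
      · have h1 := mul_le_mul_of_nonneg_right hcase hlogr0
        have h2 : (0:ℝ) ≤ 4*A1*R1^2 :=
          mul_nonneg (mul_nonneg (by norm_num) hA1.le) (sq_nonneg R1)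
        linarith [h1, h2]
      · push_neg at hcase
        have hρeq : ρ = r ^ ((1-β):ℝ) := by
          rw [hρdef, Real.rpow_def_of_pos hrpos]
          ring_nf
        have hρpos' : (0:ℝ) < r ^ ((1-β):ℝ) := Real.rpow_pos_of_pos hrpos _
        have hrsplit : r ^ (β:ℝ) * r ^ ((1-β):ℝ) = r := by
          rw [← Real.rpow_add hrpos]
          norm_num
        have hklt : β/8 * (r ^ (β:ℝ)) < 4*A1 := by
          by_contra hcon
          push_neg at hcon
          have h1 : 4*A1 * (r ^ ((1-β):ℝ)) ≤ (β/8 * r ^ (β:ℝ)) * (r ^ ((1-β):ℝ)) :=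
            mul_le_mul_of_nonneg_right hcon hρpos'.le
          rw [hρeq] at hcase
          have e1 : (β/8 * r ^ (β:ℝ)) * (r ^ ((1-β):ℝ)) = β/8 * r := by
            rw [mul_assoc, hrsplit]
          linarith
        have hrR1 : r ≤ R1 := by
          have h2 : r ^ (β:ℝ) ≤ 32*A1/β := by
            rw [le_div_iff₀ hβ]
            linarith [hklt]
          have h3 : (r ^ (β:ℝ)) ^ (β⁻¹:ℝ) ≤ (32*A1/β) ^ (β⁻¹:ℝ) :=
            Real.rpow_le_rpow (Real.rpow_nonneg hrpos.le _) h2 (by positivity)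
          rw [← Real.rpow_mul hrpos.le, mul_inv_cancel₀ hβ.ne', Real.rpow_one] at h3
          rw [hR1def]
          exact h3
        have hlogr_le : Real.log r ≤ r := by
          have := Real.log_le_sub_one_of_pos hrpos
          linarith
        have h4 : ρ * Real.log r ≤ r * r := mul_le_mul hρr hlogr_le hlogr0 hrpos.le
        have h5 : r * r ≤ R1^2 := by
          rw [sq]
          exact mul_self_le_mul_self hrpos.le hrR1
        have h6 : 0 ≤ β/8 * (r*Real.log r) := by positivity
        have h7 : 4*A1*(ρ * Real.log r) ≤ 4*A1*(R1^2) :=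
          mul_le_mul_of_nonneg_left (le_trans h4 h5) (by positivity)
        linarith
    -- the E_c piece
    have hEc : 2*A1^2 * ∑ p ∈ P, ((p:ℝ)*Real.sqrt p)⁻¹ ≤ 4*A1^2 := by
      have hsub : P ⊆ Icc 2 ⌊z⌋₊ := by
        intro p hp
        rw [Finset.mem_Icc]
        exact ⟨(hPprime p hp).two_le, (hPmem p hp).1.2⟩
      have h1 : ∑ p ∈ P, ((p:ℝ)*Real.sqrt p)⁻¹ ≤ 2 := by
        calc ∑ p ∈ P, ((p:ℝ)*Real.sqrt p)⁻¹
            ≤ ∑ m ∈ Icc 2 ⌊z⌋₊, ((m:ℝ)*Real.sqrt m)⁻¹ :=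
            Finset.sum_le_sum_of_subset_of_nonneg hsub (fun m hm _ => by positivity)
          _ ≤ 2 := sqrt_sum_le _
      have h2 : 2*A1^2 * ∑ p ∈ P, ((p:ℝ)*Real.sqrt p)⁻¹ ≤ 2*A1^2 * 2 :=
        mul_le_mul_of_nonneg_left h1 (by positivity)
      linarith
    --总 total exponent bound
    have hEtot : ∑ p ∈ P, (f p / (p:ℝ) + A1*((p:ℝ)^(-δ) - (p:ℝ)⁻¹)
        + 2*A1^2*((p:ℝ)*Real.sqrt p)⁻¹)
        ≤ (∑ p ∈ (Finset.Icc 1 ⌊z⌋₊).filter (fun p : ℕ => p.Prime ∧ ¬ p ∣ k), f p / (p:ℝ))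
          + (β/8 * (r*Real.log r) + (C1 - 1)) := by
      rw [Finset.sum_add_distrib, Finset.sum_add_distrib, ← Finset.mul_sum, ← Finset.mul_sum]
      have := hEb.trans hcrit
      rw [hC1def]
      linarith
    -- final assembly
    calc ∑ n ∈ S, f n / (n:ℝ) ≤ W * ∑ n ∈ S, g n := hstepA
      _ ≤ W * Real.exp (∑ p ∈ P, (f p / (p:ℝ) + A1*((p:ℝ)^(-δ) - (p:ℝ)⁻¹)
            + 2*A1^2*((p:ℝ)*Real.sqrt p)⁻¹)) :=
          mul_le_mul_of_nonneg_left (le_trans hstepB hstepD) hWpos.le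
      _ ≤ W * Real.exp ((∑ p ∈ (Finset.Icc 1 ⌊z⌋₊).filter
            (fun p : ℕ => p.Prime ∧ ¬ p ∣ k), f p / (p:ℝ))
            + (β/8 * (r*Real.log r) + (C1 - 1))) :=
          mul_le_mul_of_nonneg_left (Real.exp_le_exp.2 hEtot) hWpos.le
      _ ≤ Real.exp C1 * Real.exp (-(1/2) * (1 - 5/4 * β) * r * Real.log r
            + ∑ p ∈ (Finset.Icc 1 ⌊z⌋₊).filter
                (fun p : ℕ => p.Prime ∧ ¬ p ∣ k), f p / (p : ℝ)) := by
          rw [hWval, ← Real.exp_add, ← Real.exp_add]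
          apply Real.exp_le_exp.2
          have hident : -(1/2)*((1-β)*(r*Real.log r)) + (β/8*(r*Real.log r))
              = -(1/2) * (1 - 5/4*β) * r * Real.log r := by ring
          linarith
  -- conclude via the tsum bound
  apply Real.tsum_le_of_sum_range_le
  · intro n
    split
    · exact div_nonneg (hf0 n) (Nat.cast_nonneg n)
    · exact le_rfl
  intro N
  rw [← Finset.sum_filter]
  exact key _ N (fun n hn => ⟨Finset.mem_range.1 (Finset.mem_filter.1 hn).1,
    (Finset.mem_filter.1 hn).2⟩)
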